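/- The discriminant of the trinomial F(x) = x^6 + a x^5 + b, where a and b are integers, equals -b^4(6^6 b - 5^5 a^6). -/

import Mathlib

open Polynomial Matrix

set_option maxHeartbeats 1000000
set_option maxRecDepth 100000

/-- The Sylvester matrix of `f` and `g`, regarded as polynomials of degree (at most)
`m` and `n` respectively: an `(n + m) × (n + m)` matrix whose first `n` rows are the
shifted coefficient vectors of `f` and whose last `m` rows are the shifted coefficient
vectors of `g`. -/
noncomputable def sylvester (f g : Polynomial ℤ) (m n : ℕ) :
    Matrix (Fin (n + m)) (Fin (n + m)) ℤ :=
  Matrix.of fun i j =>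
    if (i : ℕ) < n then
      (if (i : ℕ) ≤ (j : ℕ) ∧ (j : ℕ) ≤ (i : ℕ) + m then f.coeff (m + i - j) else 0)
    else
      (if (i : ℕ) - n ≤ (j : ℕ) ∧ (j : ℕ) ≤ ((i : ℕ) - n) + n then
        g.coeff (n + ((i : ℕ) - n) - j) else 0)

/-- The resultant of `f` (of degree `m`) and `g` (of degree `n`). -/
noncomputable def resultant (f g : Polynomial ℤ) (m n : ℕ) : ℤ :=
  (_root_.sylvester f g m n).det

/-- The discriminant of a monic polynomial of degree 6, defined via the resultant of
`F` and its derivative: `disc F = (-1)^(6*5/2) * Res(F, F')`. -/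
noncomputable def disc6 (F : Polynomial ℤ) : ℤ :=
  (-1 : ℤ) ^ (6 * 5 / 2) * _root_.resultant F (derivative F) 6 5

lemma det_col_single {n : ℕ} (A : Matrix (Fin (n+1)) (Fin (n+1)) ℤ) (i j : Fin (n+1))
    (h0 : ∀ k, k ≠ i → A k j = 0) :
    A.det = (-1) ^ ((i : ℕ) + (j : ℕ)) * A i j * (A.submatrix i.succAbove j.succAbove).det := by
  rw [Matrix.det_succ_column _ j, Finset.sum_eq_single i]
  · intro k _ hk
    rw [h0 k hk]; ring
  · intro hi; exact absurd (Finset.mem_univ i) hi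

lemma det_col_pair {n : ℕ} (A : Matrix (Fin (n+1)) (Fin (n+1)) ℤ) (i₁ i₂ j : Fin (n+1))
    (hne : i₁ ≠ i₂) (h0 : ∀ k, k ≠ i₁ → k ≠ i₂ → A k j = 0) :
    A.det = (-1) ^ ((i₁ : ℕ) + (j : ℕ)) * A i₁ j * (A.submatrix i₁.succAbove j.succAbove).det
      + (-1) ^ ((i₂ : ℕ) + (j : ℕ)) * A i₂ j * (A.submatrix i₂.succAbove j.succAbove).det := by
  rw [Matrix.det_succ_column _ j,
    ← Finset.sum_subset (Finset.subset_univ {i₁, i₂}), Finset.sum_pair hne]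
  intro k _ hk
  simp only [Finset.mem_insert, Finset.mem_singleton, not_or] at hk
  rw [h0 k hk.1 hk.2]; ring

def M11 (a b : ℤ) : Matrix (Fin 11) (Fin 11) ℤ :=
 !![1, a, 0, 0, 0, 0, b, 0, 0, 0, 0;
  0, 1, a, 0, 0, 0, 0, b, 0, 0, 0;
  0, 0, 1, a, 0, 0, 0, 0, b, 0, 0;
  0, 0, 0, 1, a, 0, 0, 0, 0, b, 0;
  0, 0, 0, 0, 1, a, 0, 0, 0, 0, b;
  6, 5*a, 0, 0, 0, 0, 0, 0, 0, 0, 0;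
  0, 6, 5*a, 0, 0, 0, 0, 0, 0, 0, 0;
  0, 0, 6, 5*a, 0, 0, 0, 0, 0, 0, 0;
  0, 0, 0, 6, 5*a, 0, 0, 0, 0, 0, 0;
  0, 0, 0, 0, 6, 5*a, 0, 0, 0, 0, 0;
  0, 0, 0, 0, 0, 6, 5*a, 0, 0, 0, 0]

def M10 (a b : ℤ) : Matrix (Fin 10) (Fin 10) ℤ :=
 !![1, a, 0, 0, 0, 0, b, 0, 0, 0;
  0, 1, a, 0, 0, 0, 0, b, 0, 0;
  0, 0, 1, a, 0, 0, 0, 0, b, 0;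
  0, 0, 0, 1, a, 0, 0, 0, 0, b;
  6, 5*a, 0, 0, 0, 0, 0, 0, 0, 0;
  0, 6, 5*a, 0, 0, 0, 0, 0, 0, 0;
  0, 0, 6, 5*a, 0, 0, 0, 0, 0, 0;
  0, 0, 0, 6, 5*a, 0, 0, 0, 0, 0;
  0, 0, 0, 0, 6, 5*a, 0, 0, 0, 0;
  0, 0, 0, 0, 0, 6, 5*a, 0, 0, 0]

def M9 (a b : ℤ) : Matrix (Fin 9) (Fin 9) ℤ :=
 !![1, a, 0, 0, 0, 0, b, 0, 0;
  0, 1, a, 0, 0, 0, 0, b, 0;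
  0, 0, 1, a, 0, 0, 0, 0, b;
  6, 5*a, 0, 0, 0, 0, 0, 0, 0;
  0, 6, 5*a, 0, 0, 0, 0, 0, 0;
  0, 0, 6, 5*a, 0, 0, 0, 0, 0;
  0, 0, 0, 6, 5*a, 0, 0, 0, 0;
  0, 0, 0, 0, 6, 5*a, 0, 0, 0;
  0, 0, 0, 0, 0, 6, 5*a, 0, 0]

def M8 (a b : ℤ) : Matrix (Fin 8) (Fin 8) ℤ :=
 !![1, a, 0, 0, 0, 0, b, 0;
  0, 1, a, 0, 0, 0, 0, b;
  6, 5*a, 0, 0, 0, 0, 0, 0;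
  0, 6, 5*a, 0, 0, 0, 0, 0;
  0, 0, 6, 5*a, 0, 0, 0, 0;
  0, 0, 0, 6, 5*a, 0, 0, 0;
  0, 0, 0, 0, 6, 5*a, 0, 0;
  0, 0, 0, 0, 0, 6, 5*a, 0]

def M7 (a b : ℤ) : Matrix (Fin 7) (Fin 7) ℤ :=
 !![1, a, 0, 0, 0, 0, b;
  6, 5*a, 0, 0, 0, 0, 0;
  0, 6, 5*a, 0, 0, 0, 0;
  0, 0, 6, 5*a, 0, 0, 0;
  0, 0, 0, 6, 5*a, 0, 0;
  0, 0, 0, 0, 6, 5*a, 0;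
  0, 0, 0, 0, 0, 6, 5*a]

def T6 (a b : ℤ) : Matrix (Fin 6) (Fin 6) ℤ :=
 !![6, 5*a, 0, 0, 0, 0;
  0, 6, 5*a, 0, 0, 0;
  0, 0, 6, 5*a, 0, 0;
  0, 0, 0, 6, 5*a, 0;
  0, 0, 0, 0, 6, 5*a;
  0, 0, 0, 0, 0, 6]

def B6 (a b : ℤ) : Matrix (Fin 6) (Fin 6) ℤ :=
 !![1, a, 0, 0, 0, 0;
  6, 5*a, 0, 0, 0, 0;
  0, 6, 5*a, 0, 0, 0;
  0, 0, 6, 5*a, 0, 0;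
  0, 0, 0, 6, 5*a, 0;
  0, 0, 0, 0, 6, 5*a]

def B5 (a b : ℤ) : Matrix (Fin 5) (Fin 5) ℤ :=
 !![1, a, 0, 0, 0;
  6, 5*a, 0, 0, 0;
  0, 6, 5*a, 0, 0;
  0, 0, 6, 5*a, 0;
  0, 0, 0, 6, 5*a]

def B4 (a b : ℤ) : Matrix (Fin 4) (Fin 4) ℤ :=
 !![1, a, 0, 0;
  6, 5*a, 0, 0;
  0, 6, 5*a, 0;
  0, 0, 6, 5*a]

def B3 (a b : ℤ) : Matrix (Fin 3) (Fin 3) ℤ :=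
 !![1, a, 0;
  6, 5*a, 0;
  0, 6, 5*a]

def B2 (a b : ℤ) : Matrix (Fin 2) (Fin 2) ℤ :=
 !![1, a;
  6, 5*a]


lemma coeffF (a b : ℤ) (k : ℕ) : (X ^ 6 + C a * X ^ 5 + C b : ℤ[X]).coeff k =
    if k = 6 then 1 else if k = 5 then a else if k = 0 then b else 0 := by
  rcases Nat.lt_or_ge k 7 with h | h
  · interval_cases k <;> simp [coeff_X_pow, coeff_C, -eq_intCast]
  · rw [if_neg (by omega), if_neg (by omega), if_neg (by omega)]
    simp [coeff_X_pow, coeff_C, -eq_intCast] <;> omega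

lemma coeffF' (a b : ℤ) (k : ℕ) : (derivative (X ^ 6 + C a * X ^ 5 + C b : ℤ[X])).coeff k =
    if k = 5 then 6 else if k = 4 then 5*a else 0 := by
  rcases Nat.lt_or_ge k 6 with h | h
  · interval_cases k <;> simp [coeff_derivative, coeff_X_pow, coeff_C, -eq_intCast] <;> ring
  · rw [if_neg (by omega), if_neg (by omega)]
    simp [coeff_derivative, coeff_X_pow, coeff_C, -eq_intCast] <;> omega

lemma syl_eq (a b : ℤ) :
    _root_.sylvester (X ^ 6 + C a * X ^ 5 + C b) (derivative (X ^ 6 + C a * X ^ 5 + C b)) 6 5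
      = M11 a b := by
  ext i j
  simp only [_root_.sylvester, Matrix.of_apply, coeffF, coeffF']
  fin_cases i <;> fin_cases j <;> norm_num [M11]

lemma red_M11 (a b : ℤ) : (M11 a b).det = (b) * (M10 a b).det := by
  rw [det_col_single (M11 a b) ⟨4, by omega⟩ ⟨10, by omega⟩
    (by intro k hk; fin_cases k <;> first | rfl | exact absurd rfl hk)]
  have h : (M11 a b).submatrix (Fin.succAbove ⟨4, by omega⟩) (Fin.succAbove ⟨10, by omega⟩)
      = M10 a b := by
    ext i j
    fin_cases i <;> fin_cases j <;> rfl
  have e : M11 a b ⟨4, by omega⟩ ⟨10, by omega⟩ = (b) := by rfl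
  rw [h, e]
  norm_num

lemma red_M10 (a b : ℤ) : (M10 a b).det = (b) * (M9 a b).det := by
  rw [det_col_single (M10 a b) ⟨3, by omega⟩ ⟨9, by omega⟩
    (by intro k hk; fin_cases k <;> first | rfl | exact absurd rfl hk)]
  have h : (M10 a b).submatrix (Fin.succAbove ⟨3, by omega⟩) (Fin.succAbove ⟨9, by omega⟩)
      = M9 a b := by
    ext i j
    fin_cases i <;> fin_cases j <;> rfl
  have e : M10 a b ⟨3, by omega⟩ ⟨9, by omega⟩ = (b) := by rfl
  rw [h, e]
  norm_num

lemma red_M9 (a b : ℤ) : (M9 a b).det = (b) * (M8 a b).det := by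
  rw [det_col_single (M9 a b) ⟨2, by omega⟩ ⟨8, by omega⟩
    (by intro k hk; fin_cases k <;> first | rfl | exact absurd rfl hk)]
  have h : (M9 a b).submatrix (Fin.succAbove ⟨2, by omega⟩) (Fin.succAbove ⟨8, by omega⟩)
      = M8 a b := by
    ext i j
    fin_cases i <;> fin_cases j <;> rfl
  have e : M9 a b ⟨2, by omega⟩ ⟨8, by omega⟩ = (b) := by rfl
  rw [h, e]
  norm_num

lemma red_M8 (a b : ℤ) : (M8 a b).det = (b) * (M7 a b).det := by
  rw [det_col_single (M8 a b) ⟨1, by omega⟩ ⟨7, by omega⟩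
    (by intro k hk; fin_cases k <;> first | rfl | exact absurd rfl hk)]
  have h : (M8 a b).submatrix (Fin.succAbove ⟨1, by omega⟩) (Fin.succAbove ⟨7, by omega⟩)
      = M7 a b := by
    ext i j
    fin_cases i <;> fin_cases j <;> rfl
  have e : M8 a b ⟨1, by omega⟩ ⟨7, by omega⟩ = (b) := by rfl
  rw [h, e]
  norm_num

lemma red_B6 (a b : ℤ) : (B6 a b).det = (5*a) * (B5 a b).det := by
  rw [det_col_single (B6 a b) ⟨5, by omega⟩ ⟨5, by omega⟩
    (by intro k hk; fin_cases k <;> first | rfl | exact absurd rfl hk)]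
  have h : (B6 a b).submatrix (Fin.succAbove ⟨5, by omega⟩) (Fin.succAbove ⟨5, by omega⟩)
      = B5 a b := by
    ext i j
    fin_cases i <;> fin_cases j <;> rfl
  have e : B6 a b ⟨5, by omega⟩ ⟨5, by omega⟩ = (5*a) := by rfl
  rw [h, e]
  norm_num

lemma red_B5 (a b : ℤ) : (B5 a b).det = (5*a) * (B4 a b).det := by
  rw [det_col_single (B5 a b) ⟨4, by omega⟩ ⟨4, by omega⟩
    (by intro k hk; fin_cases k <;> first | rfl | exact absurd rfl hk)]
  have h : (B5 a b).submatrix (Fin.succAbove ⟨4, by omega⟩) (Fin.succAbove ⟨4, by omega⟩)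
      = B4 a b := by
    ext i j
    fin_cases i <;> fin_cases j <;> rfl
  have e : B5 a b ⟨4, by omega⟩ ⟨4, by omega⟩ = (5*a) := by rfl
  rw [h, e]
  norm_num

lemma red_B4 (a b : ℤ) : (B4 a b).det = (5*a) * (B3 a b).det := by
  rw [det_col_single (B4 a b) ⟨3, by omega⟩ ⟨3, by omega⟩
    (by intro k hk; fin_cases k <;> first | rfl | exact absurd rfl hk)]
  have h : (B4 a b).submatrix (Fin.succAbove ⟨3, by omega⟩) (Fin.succAbove ⟨3, by omega⟩)
      = B3 a b := by
    ext i j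
    fin_cases i <;> fin_cases j <;> rfl
  have e : B4 a b ⟨3, by omega⟩ ⟨3, by omega⟩ = (5*a) := by rfl
  rw [h, e]
  norm_num

lemma red_B3 (a b : ℤ) : (B3 a b).det = (5*a) * (B2 a b).det := by
  rw [det_col_single (B3 a b) ⟨2, by omega⟩ ⟨2, by omega⟩
    (by intro k hk; fin_cases k <;> first | rfl | exact absurd rfl hk)]
  have h : (B3 a b).submatrix (Fin.succAbove ⟨2, by omega⟩) (Fin.succAbove ⟨2, by omega⟩)
      = B2 a b := by
    ext i j
    fin_cases i <;> fin_cases j <;> rfl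
  have e : B3 a b ⟨2, by omega⟩ ⟨2, by omega⟩ = (5*a) := by rfl
  rw [h, e]
  norm_num


lemma det_T6 (a b : ℤ) : (T6 a b).det = 6 ^ 6 := by
  rw [Matrix.det_of_upperTriangular (by
    intro i j hij
    fin_cases i <;> fin_cases j <;> first | rfl | exact absurd hij (by decide))]
  norm_num [Fin.prod_univ_succ, T6]

lemma det_B2 (a b : ℤ) : (B2 a b).det = -a := by
  simp [B2, Matrix.det_fin_two]; ring

lemma det_B6 (a b : ℤ) : (B6 a b).det = -(5*a)^4 * a := by
  rw [red_B6, red_B5, red_B4, red_B3, det_B2]; ring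

lemma det_M7 (a b : ℤ) : (M7 a b).det = 6 ^ 6 * b - 5 ^ 5 * a ^ 6 := by
  rw [det_col_pair (M7 a b) ⟨0, by omega⟩ ⟨6, by omega⟩ ⟨6, by omega⟩ (by decide)
    (by intro k hk1 hk2; fin_cases k <;>
      first | rfl | exact absurd rfl hk1 | exact absurd rfl hk2)]
  have h1 : (M7 a b).submatrix (Fin.succAbove ⟨0, by omega⟩) (Fin.succAbove ⟨6, by omega⟩)
      = T6 a b := by
    ext i j
    fin_cases i <;> fin_cases j <;> rfl
  have h2 : (M7 a b).submatrix (Fin.succAbove ⟨6, by omega⟩) (Fin.succAbove ⟨6, by omega⟩)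
      = B6 a b := by
    ext i j
    fin_cases i <;> fin_cases j <;> rfl
  have e1 : M7 a b ⟨0, by omega⟩ ⟨6, by omega⟩ = b := by rfl
  have e2 : M7 a b ⟨6, by omega⟩ ⟨6, by omega⟩ = 5*a := by rfl
  rw [h1, h2, e1, e2, det_T6, det_B6]
  ring

/-- The discriminant of the trinomial `x^6 + a x^5 + b` equals
`-b^4 (6^6 b - 5^5 a^6)`. -/
theorem disc_trinomial (a b : ℤ) :
    disc6 (X ^ 6 + C a * X ^ 5 + C b) =
      -b ^ 4 * (6 ^ 6 * b - 5 ^ 5 * a ^ 6) := by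
  rw [disc6, _root_.resultant, syl_eq, red_M11, red_M10, red_M9, red_M8, det_M7]
  ring
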